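/- The negative Pell equation x² − d·y² = −1 has an integer solution if and only if the period length D(√d) of the continued fraction expansion of √d is odd. -/

import Mathlib

/-- Iteration of the Gauss-type map producing the complete quotients of the
continued fraction expansion of `α`. -/
noncomputable def cfIter (α : ℝ) : ℕ → ℝ
  | 0 => α
  | n + 1 => (Int.fract (cfIter α n))⁻¹

/-- The `n`-th partial quotient of the continued fraction of `α`. -/
noncomputable def cfTerm (α : ℝ) (n : ℕ) : ℤ := ⌊cfIter α n⌋

/-- `t` is an eventual period of the sequence `f`. -/
def EvPeriod (t : ℕ) (f : ℕ → ℤ) : Prop := ∃ N, ∀ n, N ≤ n → f (n + t) = f n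

/-- `periodLen α` is the length of the periodic part of the continued fraction
expansion of `α`: the least positive eventual period of its partial quotients. -/
noncomputable def periodLen (α : ℝ) : ℕ := sInf {t | 0 < t ∧ EvPeriod t (cfTerm α)}

namespace NP

lemma cfIter_zero (α : ℝ) : cfIter α 0 = α := rfl
lemma cfIter_succ (α : ℝ) (n : ℕ) : cfIter α (n+1) = (Int.fract (cfIter α n))⁻¹ := rfl

lemma irrational_fract {x : ℝ} (h : Irrational x) : Irrational (Int.fract x) := by
  rw [Int.fract]; exact h.sub_intCast _

lemma irrational_cfIter {α : ℝ} (h : Irrational α) : ∀ n, Irrational (cfIter α n)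
  | 0 => h
  | (n+1) => ((irrational_fract (irrational_cfIter h n))).inv

lemma fract_pos {x : ℝ} (h : Irrational x) : 0 < Int.fract x :=
  lt_of_le_of_ne (Int.fract_nonneg x) (Ne.symm (irrational_fract h).ne_zero)

lemma one_lt_cfIter {α : ℝ} (h : Irrational α) (n : ℕ) : 1 < cfIter α (n+1) := by
  rw [cfIter_succ]
  exact (one_lt_inv_iff₀).2 ⟨fract_pos (irrational_cfIter h n), Int.fract_lt_one _⟩

lemma cfTerm_succ_pos {α : ℝ} (h : Irrational α) (n : ℕ) : 1 ≤ cfTerm α (n+1) := by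
  rw [cfTerm]; exact Int.le_floor.2 (by exact_mod_cast (one_lt_cfIter h n).le)

lemma cf_rec {α : ℝ} (h : Irrational α) (n : ℕ) :
    cfIter α n = (cfTerm α n : ℝ) + (cfIter α (n+1))⁻¹ := by
  rw [cfIter_succ, inv_inv, cfTerm]
  exact (Int.floor_add_fract _).symm

lemma cfIter_ne_zero {α : ℝ} (h : Irrational α) (n : ℕ) : cfIter α n ≠ 0 :=
  (irrational_cfIter h n).ne_zero

lemma cfIter_add (α : ℝ) (m n : ℕ) : cfIter α (m + n) = cfIter (cfIter α m) n := by
  induction n with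
  | zero => rfl
  | succ n ih => rw [← Nat.add_assoc, cfIter_succ, ih, cfIter_succ]

lemma cfTerm_add (α : ℝ) (m n : ℕ) : cfTerm α (m + n) = cfTerm (cfIter α m) n := by
  rw [cfTerm, cfTerm, cfIter_add]

lemma cfIter_congr_add {α : ℝ} {a b : ℕ} (h : cfIter α a = cfIter α b) (m : ℕ) :
    cfIter α (a + m) = cfIter α (b + m) := by
  rw [cfIter_add, cfIter_add, h]

/-- combined convergents recursion: `((hh n, kk n), (hh (n+1), kk (n+1)))`. -/
noncomputable def HK (α : ℝ) : ℕ → (ℤ × ℤ) × (ℤ × ℤ)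
  | 0 => ((0, 1), (1, 0))
  | n + 1 => ((HK α n).2,
      (cfTerm α n * (HK α n).2.1 + (HK α n).1.1,
       cfTerm α n * (HK α n).2.2 + (HK α n).1.2))

noncomputable def hh (α : ℝ) (n : ℕ) : ℤ := (HK α n).1.1
noncomputable def kk (α : ℝ) (n : ℕ) : ℤ := (HK α n).1.2

lemma hh_zero (α : ℝ) : hh α 0 = 0 := rfl
lemma hh_one (α : ℝ) : hh α 1 = 1 := rfl
lemma kk_zero (α : ℝ) : kk α 0 = 1 := rfl
lemma kk_one (α : ℝ) : kk α 1 = 0 := rfl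

lemma HK_fst (α : ℝ) (n : ℕ) : (HK α (n+1)).1 = (HK α n).2 := rfl

lemma hh_rec (α : ℝ) (n : ℕ) : hh α (n+2) = cfTerm α n * hh α (n+1) + hh α n := by
  show (HK α (n+2)).1.1 = _
  rw [HK_fst]; rfl

lemma kk_rec (α : ℝ) (n : ℕ) : kk α (n+2) = cfTerm α n * kk α (n+1) + kk α n := by
  show (HK α (n+2)).1.2 = _
  rw [HK_fst]; rfl

lemma detd (α : ℝ) : ∀ n, hh α (n+1) * kk α n - hh α n * kk α (n+1) = (-1)^n
  | 0 => by simp [hh_zero, hh_one, kk_zero, kk_one]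
  | (n+1) => by
      rw [hh_rec, kk_rec, pow_succ]
      have := detd α n
      ring_nf
      ring_nf at this
      linarith

end NP

namespace NP

variable {α : ℝ}

lemma kk_two (α : ℝ) : kk α 2 = 1 := by rw [kk_rec]; simp [kk_zero, kk_one]

lemma kk_facts (h : Irrational α) : ∀ n, 0 ≤ kk α n ∧ 0 ≤ kk α (n+1) ∧ 1 ≤ kk α (n+2) := by
  intro n
  induction n with
  | zero => refine ⟨by simp [kk_zero], by simp [kk_one], by simp [kk_two]⟩
  | succ n ih =>
    obtain ⟨h0, h1, h2⟩ := ih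
    refine ⟨h1, by linarith, ?_⟩
    rw [kk_rec]
    have ha := cfTerm_succ_pos h n
    nlinarith

lemma kk_nonneg (h : Irrational α) (n : ℕ) : 0 ≤ kk α n := (kk_facts h n).1

lemma kk_pos2 (h : Irrational α) (n : ℕ) : 1 ≤ kk α (n+2) := (kk_facts h n).2.2

lemma kk_ge (h : Irrational α) : ∀ n : ℕ, (n : ℤ) ≤ kk α (n+3) := by
  intro n
  induction n with
  | zero => simpa using le_trans (by norm_num) (kk_pos2 h 1)
  | succ n ih =>
    have hrec : kk α (n+4) = cfTerm α (n+2) * kk α (n+3) + kk α (n+2) := kk_rec α (n+2)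
    have ha := cfTerm_succ_pos h (n+1)
    have h2 := kk_pos2 h n
    have h3 := kk_pos2 h (n+1)
    push_cast
    show (n : ℤ) + 1 ≤ kk α (n+4)
    rw [hrec]
    nlinarith

lemma master (h : Irrational α) :
    ∀ n, α * (cfIter α n * kk α (n+1) + kk α n) = cfIter α n * hh α (n+1) + hh α n := by
  intro n
  induction n with
  | zero => simp [cfIter_zero, hh_zero, hh_one, kk_zero, kk_one]
  | succ n ih =>
    have hne : cfIter α (n+1) ≠ 0 := cfIter_ne_zero h (n+1)
    have hrec := cf_rec h n
    have hrk : kk α (n+2) = cfTerm α n * kk α (n+1) + kk α n := kk_rec α n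
    have hrh : hh α (n+2) = cfTerm α n * hh α (n+1) + hh α n := hh_rec α n
    rw [hrec] at ih
    push_cast [hrk, hrh]
    field_simp at ih ⊢
    nlinarith [ih]

lemma Dpos (h : Irrational α) (n : ℕ) :
    0 < cfIter α n * (kk α (n+1) : ℝ) + (kk α n : ℝ) := by
  cases n with
  | zero => simp [cfIter_zero, kk_zero, kk_one]
  | succ n =>
    have h1 := one_lt_cfIter h n
    have h2 := kk_pos2 h n
    have h3 := kk_nonneg h (n+1)
    have h2' : (1:ℝ) ≤ (kk α (n+2) : ℝ) := by exact_mod_cast h2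
    have h3' : (0:ℝ) ≤ (kk α (n+1) : ℝ) := by exact_mod_cast h3
    nlinarith

lemma e_eq (h : Irrational α) (n : ℕ) :
    ((kk α (n+1) : ℝ) * α - (hh α (n+1) : ℝ)) *
      (cfIter α n * (kk α (n+1) : ℝ) + (kk α n : ℝ)) = (-1)^(n+1) := by
  have hm := master h n
  have hd := detd α n
  have hd' : ((hh α (n+1) : ℝ)) * (kk α n : ℝ) - (hh α n : ℝ) * (kk α (n+1) : ℝ) = (-1)^n := by
    exact_mod_cast congrArg (Int.cast : ℤ → ℝ) hd
  have : (-1:ℝ)^(n+1) = -(-1)^n := by ring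
  rw [this, ← hd']
  linear_combination (kk α (n+1) : ℝ) * hm

end NP

namespace NP

lemma HK_congr {α β : ℝ} (h : ∀ n, cfTerm α n = cfTerm β n) : ∀ n, HK α n = HK β n := by
  intro n
  induction n with
  | zero => rfl
  | succ n ih => show HK α (n+1) = HK β (n+1); rw [HK, HK, ih, h]

lemma kk_congr {α β : ℝ} (h : ∀ n, cfTerm α n = cfTerm β n) (n : ℕ) : kk α n = kk β n := by
  rw [kk, kk, HK_congr h]

lemma hh_congr {α β : ℝ} (h : ∀ n, cfTerm α n = cfTerm β n) (n : ℕ) : hh α n = hh β n := by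
  rw [hh, hh, HK_congr h]

/-- Two irrationals with the same continued fraction terms are equal. -/
theorem eq_of_cfTerm_eq {α β : ℝ} (hα : Irrational α) (hβ : Irrational β)
    (h : ∀ n, cfTerm α n = cfTerm β n) : α = β := by
  by_contra hne
  have hab : 0 < |α - β| := abs_pos.2 (sub_ne_zero.2 hne)
  obtain ⟨m, hm⟩ := exists_nat_gt (1 / |α - β|)
  -- work at index n := m + 3
  set n := m + 3 with hn
  set X := cfIter α n with hX
  set Y := cfIter β n with hY
  have hDa : 0 < X * (kk α (n+1) : ℝ) + (kk α n : ℝ) := Dpos hα n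
  have hDb0 : 0 < Y * (kk β (n+1) : ℝ) + (kk β n : ℝ) := Dpos hβ n
  have hkc : ∀ j, kk β j = kk α j := fun j => (kk_congr h j).symm
  have hhc : ∀ j, hh β j = hh α j := fun j => (hh_congr h j).symm
  have hDb : 0 < Y * (kk α (n+1) : ℝ) + (kk α n : ℝ) := by rw [← hkc, ← hkc]; exact hDb0
  have hIa := master hα n
  have hIb := master hβ n
  rw [hkc, hkc, hhc, hhc] at hIb
  have hdet := detd α n
  have hdet' : ((hh α (n+1) : ℝ)) * (kk α n : ℝ) - (hh α n : ℝ) * (kk α (n+1) : ℝ) = (-1)^n := by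
    exact_mod_cast congrArg (Int.cast : ℤ → ℝ) hdet
  have key : (α - β) * ((X * (kk α (n+1) : ℝ) + (kk α n : ℝ)) *
      (Y * (kk α (n+1) : ℝ) + (kk α n : ℝ))) = (X - Y) * (-1)^n := by
    linear_combination (Y * (kk α (n+1) : ℝ) + (kk α n : ℝ)) * hIa
      - (X * (kk α (n+1) : ℝ) + (kk α n : ℝ)) * hIb + (X - Y) * hdet'
  have hXY : |X - Y| < 1 := by
    have h1 : (cfTerm α n : ℝ) ≤ X := Int.floor_le _
    have h2 : X < (cfTerm α n : ℝ) + 1 := Int.lt_floor_add_one _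
    have h3 : (cfTerm α n : ℝ) ≤ Y := by rw [h n]; exact Int.floor_le _
    have h4 : Y < (cfTerm α n : ℝ) + 1 := by rw [h n]; exact Int.lt_floor_add_one _
    rw [abs_lt]; constructor <;> linarith
  have habs : |α - β| * ((X * (kk α (n+1) : ℝ) + (kk α n : ℝ)) *
      (Y * (kk α (n+1) : ℝ) + (kk α n : ℝ))) < 1 := by
    calc |α - β| * _ = |(α - β) * ((X * (kk α (n+1) : ℝ) + (kk α n : ℝ)) *
        (Y * (kk α (n+1) : ℝ) + (kk α n : ℝ)))| := by
          rw [abs_mul, abs_of_pos (mul_pos hDa hDb)]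
      _ = |X - Y| := by rw [key, abs_mul]; simp [abs_pow]
      _ < 1 := hXY
  -- lower bound on the denominators
  have hkk : (m : ℤ) ≤ kk α (n+1) := by
    have h5 := kk_ge hα (m+1)
    have e : m + 1 + 3 = (m+3) + 1 := by omega
    rw [e] at h5
    exact le_trans (by exact_mod_cast Nat.le_succ m) h5
  have hkk' : (m : ℝ) ≤ (kk α (n+1) : ℝ) := by exact_mod_cast hkk
  have h1X : 1 < X := one_lt_cfIter hα (m+2)
  have h1Y : 1 < Y := one_lt_cfIter hβ (m+2)
  have hkn : (0:ℝ) ≤ (kk α n : ℝ) := by exact_mod_cast kk_nonneg hα n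
  have hDa' : (m : ℝ) ≤ X * (kk α (n+1) : ℝ) + (kk α n : ℝ) := by nlinarith
  have hDb' : (m : ℝ) ≤ Y * (kk α (n+1) : ℝ) + (kk α n : ℝ) := by nlinarith
  have hmpos : (0:ℝ) < m := lt_trans (by positivity) hm
  have hm0 : m ≠ 0 := by
    intro h0
    rw [h0] at hmpos
    simp at hmpos
  have hm1 : (1:ℝ) ≤ m := by exact_mod_cast Nat.one_le_iff_ne_zero.2 hm0
  have hm' : 1 < |α - β| * m := by
    rw [div_lt_iff₀ hab] at hm
    nlinarith
  have hprod : (m:ℝ) * m ≤ (X * (kk α (n+1) : ℝ) + (kk α n : ℝ)) *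
      (Y * (kk α (n+1) : ℝ) + (kk α n : ℝ)) := mul_le_mul hDa' hDb' hmpos.le hDa.le
  nlinarith

end NP

namespace NP

variable {α : ℝ}

lemma abs_le_abs_add_of_mul_nonneg (s t : ℝ) (h : 0 ≤ s * t) : |s| ≤ |s + t| := by
  nlinarith [abs_mul_abs_self s, abs_mul_abs_self (s+t), abs_nonneg s, abs_nonneg (s+t),
    le_abs_self s, neg_abs_le s, le_abs_self (s+t), neg_abs_le (s+t)]

lemma exists_window (h : Irrational α) (q : ℤ) (hq : 0 < q) :
    ∃ n, kk α (n+2) ≤ q ∧ q < kk α (n+3) := by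
  have hex : ∃ n, q < kk α (n+3) := by
    refine ⟨q.toNat + 1, ?_⟩
    have h1 := kk_ge h (q.toNat + 1)
    have h2 : (q.toNat : ℤ) = q := Int.toNat_of_nonneg hq.le
    omega
  classical
  refine ⟨Nat.find hex, ?_, Nat.find_spec hex⟩
  rcases Nat.eq_zero_or_pos (Nat.find hex) with h0 | h0
  · rw [h0, kk_two]; exact hq
  · obtain ⟨m, hm⟩ : ∃ m, Nat.find hex = m + 1 := ⟨Nat.find hex - 1, by omega⟩
    have := Nat.find_min hex (m := m) (by omega)
    push_neg at this
    calc kk α (Nat.find hex + 2) = kk α (m + 3) := by rw [hm]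
      _ ≤ q := this

lemma neg_one_pow_sq (n : ℕ) : ((-1:ℤ)^n) * ((-1:ℤ)^n) = 1 := by
  rw [← pow_add]
  exact Even.neg_one_pow ⟨n, rfl⟩

lemma best_approx (h : Irrational α) (n : ℕ) (p q : ℤ) (hq : 0 < q)
    (hlt : q < kk α (n+3)) :
    |(kk α (n+2) : ℝ) * α - (hh α (n+2) : ℝ)| ≤ |(q:ℝ) * α - (p:ℝ)| := by
  classical
  set s : ℤ := (-1)^n with hs
  have hss : s * s = 1 := neg_one_pow_sq n
  have hdet := detd α (n+2)
  have hdet2 : hh α (n+3) * kk α (n+2) - hh α (n+2) * kk α (n+3) = s := by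
    rw [hdet, hs]; rw [pow_succ, pow_succ]; ring
  set x : ℤ := s * (q * hh α (n+3) - p * kk α (n+3)) with hx
  set y : ℤ := s * (p * kk α (n+2) - q * hh α (n+2)) with hy
  have hxk : x * kk α (n+2) + y * kk α (n+3) = q := by
    rw [hx, hy]
    linear_combination (s * q) * hdet2 + q * hss
  have hxh : x * hh α (n+2) + y * hh α (n+3) = p := by
    rw [hx, hy]
    linear_combination (s * p) * hdet2 + p * hss
  set e1 : ℝ := (kk α (n+2) : ℝ) * α - (hh α (n+2) : ℝ) with he1
  set e2 : ℝ := (kk α (n+3) : ℝ) * α - (hh α (n+3) : ℝ) with he2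
  have hqp : (q:ℝ) * α - p = x * e1 + y * e2 := by
    have h1 : ((x * kk α (n+2) + y * kk α (n+3) : ℤ) : ℝ) = (q:ℝ) := by exact_mod_cast congrArg (Int.cast : ℤ → ℝ) hxk
    have h2 : ((x * hh α (n+2) + y * hh α (n+3) : ℤ) : ℝ) = (p:ℝ) := by exact_mod_cast congrArg (Int.cast : ℤ → ℝ) hxh
    push_cast at h1 h2
    rw [he1, he2]
    linear_combination h2 - α * h1
  have hE1 := e_eq h (n+1)
  have hE2 := e_eq h (n+2)
  have hD1 := Dpos h (n+1)
  have hD2 := Dpos h (n+2)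
  rw [show n+1+1 = n+2 from rfl] at hE1
  rw [show n+2+1 = n+3 from rfl] at hE2
  rw [← he1] at hE1
  rw [← he2] at hE2
  set D1 : ℝ := cfIter α (n+1) * (kk α (n+2) : ℝ) + (kk α (n+1) : ℝ) with hd1
  set D2 : ℝ := cfIter α (n+2) * (kk α (n+3) : ℝ) + (kk α (n+2) : ℝ) with hd2
  have hpowsq : ((-1:ℝ)^(n+2)) * ((-1:ℝ)^(n+2)) = 1 := by
    rw [← pow_add]
    exact Even.neg_one_pow ⟨n+2, rfl⟩
  have hmm : (e1 * e2) * (D1 * D2) = -1 := by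
    have h3 : (-1:ℝ)^(n+3) = -(-1:ℝ)^(n+2) := by rw [pow_succ (-1:ℝ) (n+2)]; ring
    calc (e1 * e2) * (D1 * D2) = (e1 * D1) * (e2 * D2) := by ring
      _ = ((-1:ℝ)^(n+2)) * ((-1:ℝ)^(n+3)) := by rw [hE1, hE2]
      _ = -(((-1:ℝ)^(n+2)) * ((-1:ℝ)^(n+2))) := by rw [h3]; ring
      _ = -1 := by rw [hpowsq]
  have hee : e1 * e2 < 0 := by nlinarith [mul_pos hD1 hD2]
  clear hx hy he1 he2 hd1 hd2
  clear_value x y e1 e2 D1 D2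
  have hk1 : 1 ≤ kk α (n+2) := kk_pos2 h n
  have hk1' : 1 ≤ kk α (n+3) := kk_pos2 h (n+1)
  rcases eq_or_ne y 0 with hy0 | hy0
  · -- y = 0
    rw [hy0, zero_mul, add_zero] at hxk
    rw [hy0] at hqp
    rw [Int.cast_zero, zero_mul, add_zero] at hqp
    have hxpos : 1 ≤ x := by nlinarith
    have hx1 : (1:ℝ) ≤ |(x:ℝ)| := by
      rw [abs_of_pos (by exact_mod_cast hxpos : (0:ℝ) < (x:ℝ))]
      exact_mod_cast hxpos
    rw [hqp, abs_mul]
    nlinarith [abs_nonneg e1]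
  · rcases eq_or_ne x 0 with hx0 | hx0
    · exfalso
      rw [hx0, zero_mul, zero_add] at hxk
      rcases lt_trichotomy y 0 with hyl | hye | hyg
      · nlinarith
      · exact hy0 hye
      · nlinarith
    · -- both nonzero: opposite signs
      have hxy : x * y < 0 := by
        rcases lt_trichotomy x 0 with hxl | hxe | hxg
        · rcases lt_trichotomy y 0 with hyl | hye | hyg
          · exfalso; nlinarith
          · exact absurd hye hy0
          · nlinarith
        · exact absurd hxe hx0
        · rcases lt_trichotomy y 0 with hyl | hye | hyg
          · nlinarith
          · exact absurd hye hy0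
          · exfalso; nlinarith
      have hxyR : ((x:ℝ)) * ((y:ℝ)) < 0 := by exact_mod_cast hxy
      have hsame : 0 ≤ (x * e1) * (y * e2) := by nlinarith
      have h1le : (1:ℝ) ≤ |(x:ℝ)| := by
        have : 1 ≤ |x| := Int.one_le_abs hx0
        exact_mod_cast this
      calc |e1| = 1 * |e1| := by ring
        _ ≤ |(x:ℝ)| * |e1| := by nlinarith [abs_nonneg e1]
        _ = |(x:ℝ) * e1| := (abs_mul _ _).symm
        _ ≤ |(x:ℝ) * e1 + (y:ℝ) * e2| := abs_le_abs_add_of_mul_nonneg _ _ hsame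
        _ = |(q:ℝ) * α - p| := by rw [hqp]

theorem legendre (h : Irrational α) (p q : ℤ) (hq : 0 < q)
    (happ : |(q:ℝ) * α - p| * (2 * q) < 1) :
    ∃ n, p * kk α (n+2) = q * hh α (n+2) := by
  obtain ⟨n, hge, hlt⟩ := exists_window h q hq
  refine ⟨n, ?_⟩
  by_contra hpq
  have hne : p * kk α (n+2) - q * hh α (n+2) ≠ 0 := sub_ne_zero_of_ne hpq
  have h1 : (1:ℝ) ≤ |(p:ℝ) * (kk α (n+2):ℝ) - (q:ℝ) * (hh α (n+2):ℝ)| := by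
    have : (1:ℤ) ≤ |p * kk α (n+2) - q * hh α (n+2)| := Int.one_le_abs hne
    calc (1:ℝ) ≤ ((|p * kk α (n+2) - q * hh α (n+2)| : ℤ) : ℝ) := by exact_mod_cast this
      _ = |((p * kk α (n+2) - q * hh α (n+2) : ℤ) : ℝ)| := by rw [Int.cast_abs]
      _ = _ := by push_cast; ring_nf
  have hba := best_approx h n p q hq hlt
  have hk1 : 1 ≤ kk α (n+2) := kk_pos2 h n
  have hkR : (1:ℝ) ≤ (kk α (n+2) : ℝ) := by exact_mod_cast hk1
  have hkq : (kk α (n+2) : ℝ) ≤ (q:ℝ) := by exact_mod_cast hge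
  have hqR : (0:ℝ) < (q:ℝ) := by exact_mod_cast hq
  -- p*k - q*h = -k*(q*α - p) + q*(k*α - h)
  have hid : (p:ℝ) * (kk α (n+2):ℝ) - (q:ℝ) * (hh α (n+2):ℝ) =
      -(kk α (n+2):ℝ) * ((q:ℝ) * α - p) + (q:ℝ) * ((kk α (n+2):ℝ) * α - (hh α (n+2):ℝ)) := by
    ring
  have htri : |(p:ℝ) * (kk α (n+2):ℝ) - (q:ℝ) * (hh α (n+2):ℝ)| ≤
      (kk α (n+2):ℝ) * |(q:ℝ) * α - p| + (q:ℝ) * |(kk α (n+2):ℝ) * α - (hh α (n+2):ℝ)| := by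
    rw [hid]
    calc |_ + _| ≤ |(-(kk α (n+2):ℝ)) * ((q:ℝ) * α - p)| + |(q:ℝ) * ((kk α (n+2):ℝ) * α - (hh α (n+2):ℝ))| := abs_add_le _ _
      _ = _ := by rw [abs_mul, abs_mul, abs_neg, abs_of_pos (by linarith : (0:ℝ) < (kk α (n+2):ℝ)), abs_of_pos hqR]
  nlinarith [abs_nonneg ((q:ℝ) * α - p), abs_nonneg ((kk α (n+2):ℝ) * α - (hh α (n+2):ℝ))]

end NP

namespace NP

noncomputable def Pd (d : ℕ) (n : ℕ) : ℤ :=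
  (-1)^n * (d * kk (Real.sqrt d) (n+1) * kk (Real.sqrt d) n
    - hh (Real.sqrt d) (n+1) * hh (Real.sqrt d) n)

noncomputable def Qd (d : ℕ) (n : ℕ) : ℤ :=
  (-1)^n * (hh (Real.sqrt d) (n+1)^2 - d * kk (Real.sqrt d) (n+1)^2)

variable {d : ℕ}

lemma lin_indep (hirr : Irrational (Real.sqrt d)) (a b : ℤ)
    (h : (a:ℝ) + b * Real.sqrt d = 0) : a = 0 ∧ b = 0 := by
  rcases eq_or_ne b 0 with hb | hb
  · rw [hb] at h
    push_cast at h
    simp at h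
    exact ⟨by exact_mod_cast h, hb⟩
  · exfalso
    apply hirr
    refine ⟨(-a : ℚ)/(b : ℚ), ?_⟩
    have hbR : (b:ℝ) ≠ 0 := Int.cast_ne_zero.2 hb
    push_cast
    field_simp
    linarith

lemma sqrt_mul_self' (d : ℕ) : Real.sqrt d * Real.sqrt d = (d:ℝ) :=
  Real.mul_self_sqrt (by positivity)

lemma hQne (hirr : Irrational (Real.sqrt d)) (n : ℕ) :
    hh (Real.sqrt d) (n+1)^2 ≠ (d:ℤ) * kk (Real.sqrt d) (n+1)^2 := by
  intro hEq
  rcases eq_or_ne (kk (Real.sqrt d) (n+1)) 0 with hk | hk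
  · rw [hk] at hEq
    simp at hEq
    have hdet := detd (Real.sqrt d) n
    rw [hk, hEq] at hdet
    simp at hdet
    exact absurd hdet.symm (by positivity)
  · apply hirr
    refine ⟨(|hh (Real.sqrt d) (n+1)| : ℚ) / (|kk (Real.sqrt d) (n+1)| : ℚ), ?_⟩
    have h1 : ((hh (Real.sqrt d) (n+1) : ℝ))^2 = (d:ℝ) * (kk (Real.sqrt d) (n+1) : ℝ)^2 := by
      exact_mod_cast hEq
    have hrr := sqrt_mul_self' d
    have hrpos := Real.sqrt_nonneg (d:ℝ)
    have hkabs : (0:ℝ) < |(kk (Real.sqrt d) (n+1) : ℝ)| := by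
      rw [abs_pos, Int.cast_ne_zero]; exact hk
    have habs : (0:ℝ) ≤ |(hh (Real.sqrt d) (n+1) : ℝ)| := abs_nonneg _
    have h2 : (Real.sqrt d * |(kk (Real.sqrt d) (n+1) : ℝ)|)^2
        = (|(hh (Real.sqrt d) (n+1) : ℝ)|)^2 := by
      rw [mul_pow, sq_abs, sq_abs]
      nlinarith
    have h3 : Real.sqrt d * |(kk (Real.sqrt d) (n+1) : ℝ)| = |(hh (Real.sqrt d) (n+1) : ℝ)| := by
      have hge : (0:ℝ) ≤ Real.sqrt d * |(kk (Real.sqrt d) (n+1) : ℝ)| := by positivity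
      apply le_antisymm <;> nlinarith
    push_cast
    rw [div_eq_iff (ne_of_gt hkabs)]
    linarith [h3]

lemma Qd_ne_zero (hirr : Irrational (Real.sqrt d)) (n : ℕ) : Qd d n ≠ 0 := by
  intro h0
  have : hh (Real.sqrt d) (n+1)^2 - (d:ℤ) * kk (Real.sqrt d) (n+1)^2 = 0 := by
    have hne : ((-1:ℤ))^n ≠ 0 := by positivity
    exact (mul_eq_zero.1 h0).resolve_left hne
  exact hQne hirr n (by linarith)

lemma rep (hirr : Irrational (Real.sqrt d)) (n : ℕ) :
    cfIter (Real.sqrt d) n * (Qd d n : ℝ) = Pd d n + Real.sqrt d := by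
  have hsq := sqrt_mul_self' d
  have hdet := detd (Real.sqrt d) n
  have hdet' : ((hh (Real.sqrt d) (n+1) : ℝ)) * (kk (Real.sqrt d) n : ℝ)
      - (hh (Real.sqrt d) n : ℝ) * (kk (Real.sqrt d) (n+1) : ℝ) = (-1:ℝ)^n := by
    exact_mod_cast congrArg (Int.cast : ℤ → ℝ) hdet
  have hss : ((-1:ℝ)^n) * ((-1:ℝ)^n) = 1 := by
    rw [← pow_add]; exact Even.neg_one_pow ⟨n, rfl⟩
  have hX : cfIter (Real.sqrt d) n * ((hh (Real.sqrt d) (n+1):ℝ)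
      - Real.sqrt d * (kk (Real.sqrt d) (n+1):ℝ))
      = Real.sqrt d * (kk (Real.sqrt d) n : ℝ) - (hh (Real.sqrt d) n : ℝ) := by
    linear_combination -(master hirr n)
  have hQ : ((Qd d n : ℤ) : ℝ) = (-1:ℝ)^n * ((hh (Real.sqrt d) (n+1):ℝ)^2
      - (d:ℝ) * (kk (Real.sqrt d) (n+1):ℝ)^2) := by
    rw [Qd]; push_cast; ring
  have hP : ((Pd d n : ℤ) : ℝ) = (-1:ℝ)^n * ((d:ℝ) * (kk (Real.sqrt d) (n+1):ℝ)
      * (kk (Real.sqrt d) n:ℝ) - (hh (Real.sqrt d) (n+1):ℝ) * (hh (Real.sqrt d) n:ℝ)) := by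
    rw [Pd]; push_cast; ring
  rw [hQ, hP]
  linear_combination ((-1:ℝ)^n * ((hh (Real.sqrt d) (n+1):ℝ)
      + Real.sqrt d * (kk (Real.sqrt d) (n+1):ℝ))) * hX
    + ((-1:ℝ)^n * cfIter (Real.sqrt d) n * (kk (Real.sqrt d) (n+1):ℝ)^2
      + (-1:ℝ)^n * (kk (Real.sqrt d) n:ℝ) * (kk (Real.sqrt d) (n+1):ℝ)) * hsq
    + ((-1:ℝ)^n * Real.sqrt d) * hdet' + Real.sqrt d * hss

lemma Pd_rec (d : ℕ) (n : ℕ) :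
    Pd d (n+1) = cfTerm (Real.sqrt d) n * Qd d n - Pd d n := by
  rw [Pd, Pd, Qd, hh_rec, kk_rec, pow_succ]
  ring

lemma QQ (hirr : Irrational (Real.sqrt d)) (n : ℕ) :
    ((Qd d (n+1) : ℝ)) * (Qd d n : ℝ)
      = (Real.sqrt d - Pd d (n+1)) * (Pd d (n+1) + Real.sqrt d) := by
  have h1 := rep hirr n
  have h2 := rep hirr (n+1)
  have hfr : cfIter (Real.sqrt d) (n+1) * (cfIter (Real.sqrt d) n - cfTerm (Real.sqrt d) n) = 1 := by
    rw [cfIter_succ, cfTerm]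
    rw [show cfIter (Real.sqrt d) n - (⌊cfIter (Real.sqrt d) n⌋ : ℝ)
      = Int.fract (cfIter (Real.sqrt d) n) from rfl]
    exact inv_mul_cancel₀ (irrational_fract (irrational_cfIter hirr n)).ne_zero
  have hpr : ((Pd d (n+1) : ℤ) : ℝ) = cfTerm (Real.sqrt d) n * (Qd d n : ℝ) - (Pd d n : ℝ) := by
    rw [Pd_rec]; push_cast; ring
  -- multiply hfr by Qd(n+1) * Qd n
  have key : (cfIter (Real.sqrt d) (n+1) * (Qd d (n+1) : ℝ))
      * ((cfIter (Real.sqrt d) n * (Qd d n : ℝ))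
        - (cfTerm (Real.sqrt d) n : ℝ) * (Qd d n : ℝ))
      = (Qd d (n+1) : ℝ) * (Qd d n : ℝ) := by
    linear_combination ((Qd d (n+1) : ℝ) * (Qd d n : ℝ)) * hfr
  rw [h1, h2] at key
  rw [← key, hpr]
  ring

lemma Pd_zero (d : ℕ) : Pd d 0 = 0 := by
  rw [Pd]; simp [hh_zero, hh_one, kk_zero, kk_one]

lemma Qd_zero (d : ℕ) : Qd d 0 = 1 := by
  rw [Qd]; simp [hh_zero, hh_one, kk_zero, kk_one]

lemma hh_two (α : ℝ) : hh α 2 = cfTerm α 0 := by rw [hh_rec]; simp [hh_zero, hh_one]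

lemma Pd_one (d : ℕ) : Pd d 1 = cfTerm (Real.sqrt d) 0 := by
  rw [Pd, hh_two, kk_two]; simp [hh_one, kk_one]

lemma Qd_one (d : ℕ) : Qd d 1 = d - cfTerm (Real.sqrt d) 0 ^ 2 := by
  rw [Qd, hh_two, kk_two]; ring

lemma sqrt_gt_one (hd2 : 2 ≤ d) : 1 < Real.sqrt d := by
  have h1 : (2:ℝ) ≤ (d:ℝ) := by exact_mod_cast hd2
  nlinarith [sqrt_mul_self' d, Real.sqrt_nonneg (d:ℝ)]

lemma A0_pos (hd2 : 2 ≤ d) : 1 ≤ cfTerm (Real.sqrt d) 0 := by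
  rw [cfTerm, cfIter_zero]
  exact Int.le_floor.2 (by exact_mod_cast (sqrt_gt_one hd2).le)

lemma A0_lt (hirr : Irrational (Real.sqrt d)) :
    (cfTerm (Real.sqrt d) 0 : ℝ) < Real.sqrt d := by
  rw [cfTerm, cfIter_zero]
  exact lt_of_le_of_ne (Int.floor_le _) (Ne.symm (hirr.ne_int _))

lemma lt_A0_add_one : Real.sqrt d < (cfTerm (Real.sqrt d) 0 : ℝ) + 1 := by
  rw [cfTerm, cfIter_zero]
  exact Int.lt_floor_add_one _

lemma reduced (hirr : Irrational (Real.sqrt d)) (hd2 : 2 ≤ d) :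
    ∀ n, 1 ≤ n → 0 < Qd d n ∧ (Pd d n : ℝ) < Real.sqrt d
      ∧ Real.sqrt d - Qd d n < Pd d n := by
  intro n hn
  induction n, hn using Nat.le_induction with
  | base =>
    have hA0 := A0_pos hd2
    have hA0R : (1:ℝ) ≤ (cfTerm (Real.sqrt d) 0 : ℝ) := by exact_mod_cast hA0
    have hlt := A0_lt hirr
    have hlt1 := lt_A0_add_one (d := d)
    have hQ : 0 < Qd d 1 := by
      rw [Qd_one]
      have : ((cfTerm (Real.sqrt d) 0 : ℝ))^2 < (d:ℝ) := by
        nlinarith [sqrt_mul_self' d]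
      have h2 : (cfTerm (Real.sqrt d) 0)^2 < (d:ℤ) := by exact_mod_cast this
      omega
    refine ⟨hQ, by rw [Pd_one]; exact hlt, ?_⟩
    rw [Pd_one, Qd_one]
    have h1 : (1:ℤ) ≤ (d:ℤ) - cfTerm (Real.sqrt d) 0 ^ 2 := by
      rw [Qd_one] at hQ; omega
    have h1R : (1:ℝ) ≤ (d:ℝ) - ((cfTerm (Real.sqrt d) 0 :ℝ))^2 := by exact_mod_cast h1
    push_cast
    nlinarith
  | succ n hn ih =>
    obtain ⟨hQpos, hPlt, hPgt⟩ := ih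
    obtain ⟨m, rfl⟩ : ∃ m, n = m + 1 := ⟨n - 1, by omega⟩
    have hAn : 1 ≤ cfTerm (Real.sqrt d) (m+1) := cfTerm_succ_pos hirr m
    have hAnR : (1:ℝ) ≤ (cfTerm (Real.sqrt d) (m+1) : ℝ) := by exact_mod_cast hAn
    have hQnR : (0:ℝ) < (Qd d (m+1) : ℝ) := by exact_mod_cast hQpos
    have hQQ := QQ hirr (m+1)
    have hPr : ((Pd d (m+2) : ℤ) : ℝ)
        = (cfTerm (Real.sqrt d) (m+1) : ℝ) * (Qd d (m+1) : ℝ) - (Pd d (m+1) : ℝ) := by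
      rw [Pd_rec]; push_cast; ring
    have hI1 : (Qd d (m+1) : ℝ) < (Pd d (m+2) : ℝ) + Real.sqrt d := by
      rw [hPr]; nlinarith
    have hrep := rep hirr (m+2)
    have halpha : 1 < cfIter (Real.sqrt d) (m+2) := one_lt_cfIter hirr (m+1)
    have hP'ne : (Pd d (m+2) : ℝ) ≠ Real.sqrt d := Ne.symm (hirr.ne_int _)
    have hP'lt : (Pd d (m+2) : ℝ) < Real.sqrt d := by
      rcases lt_or_gt_of_ne hP'ne with h | h
      · exact h
      · exfalso
        have hQ'neg : (Qd d (m+2) : ℝ) < 0 := by nlinarith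
        nlinarith
    have hQ'posR : (0:ℝ) < (Qd d (m+2) : ℝ) := by nlinarith
    refine ⟨by exact_mod_cast hQ'posR, hP'lt, ?_⟩
    nlinarith

lemma Pd_pos (hirr : Irrational (Real.sqrt d)) (hd2 : 2 ≤ d) (n : ℕ) (hn : 1 ≤ n) :
    0 < Pd d n := by
  obtain ⟨hQ, hPl, hPg⟩ := reduced hirr hd2 n hn
  have hrep := rep hirr n
  have hQR : (0:ℝ) < (Qd d n : ℝ) := by exact_mod_cast hQ
  have halpha : 1 < cfIter (Real.sqrt d) n := by
    obtain ⟨m, rfl⟩ : ∃ m, n = m + 1 := ⟨n - 1, by omega⟩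
    exact one_lt_cfIter hirr m
  have : (0:ℝ) < (Pd d n : ℝ) := by nlinarith
  exact_mod_cast this

lemma PQ_bounds (hirr : Irrational (Real.sqrt d)) (hd2 : 2 ≤ d) (n : ℕ) (hn : 1 ≤ n) :
    1 ≤ Pd d n ∧ Pd d n ≤ ⌊Real.sqrt d⌋ ∧ 1 ≤ Qd d n ∧ Qd d n ≤ 2*⌊Real.sqrt d⌋ + 1 := by
  obtain ⟨hQ, hPl, hPg⟩ := reduced hirr hd2 n hn
  have hP := Pd_pos hirr hd2 n hn
  refine ⟨hP, Int.le_floor.2 hPl.le, hQ, ?_⟩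
  have hrep := rep hirr n
  have hQR : (0:ℝ) < (Qd d n : ℝ) := by exact_mod_cast hQ
  have halpha : 1 < cfIter (Real.sqrt d) n := by
    obtain ⟨m, rfl⟩ : ∃ m, n = m + 1 := ⟨n - 1, by omega⟩
    exact one_lt_cfIter hirr m
  have hQP : (Qd d n : ℝ) < (Pd d n : ℝ) + Real.sqrt d := by nlinarith
  have hfl : Real.sqrt d < (⌊Real.sqrt d⌋ : ℝ) + 1 := Int.lt_floor_add_one _
  have hPfl : (Pd d n : ℝ) ≤ (⌊Real.sqrt d⌋ : ℝ) := by exact_mod_cast Int.le_floor.2 hPl.le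
  have : (Qd d n : ℝ) < 2*(⌊Real.sqrt d⌋ : ℝ) + 2 := by linarith
  have h2 : Qd d n < 2*⌊Real.sqrt d⌋ + 2 := by exact_mod_cast this
  omega

lemma iter_eq_of_PQ_eq (hirr : Irrational (Real.sqrt d)) {n m : ℕ}
    (hP : Pd d n = Pd d m) (hQ : Qd d n = Qd d m) :
    cfIter (Real.sqrt d) n = cfIter (Real.sqrt d) m := by
  have h1 := rep hirr n
  have h2 := rep hirr m
  rw [← hP, ← hQ] at h2
  have hQne : ((Qd d n : ℤ) : ℝ) ≠ 0 := Int.cast_ne_zero.2 (Qd_ne_zero hirr n)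
  field_simp at h1 h2
  rw [← h1] at h2
  exact (mul_left_cancel₀ hQne (h2.trans (mul_comm _ _))).symm

lemma PQ_eq_of_iter_eq (hirr : Irrational (Real.sqrt d)) {n m : ℕ}
    (h : cfIter (Real.sqrt d) n = cfIter (Real.sqrt d) m) :
    Pd d n = Pd d m ∧ Qd d n = Qd d m := by
  have h1 := rep hirr n
  have h2 := rep hirr m
  rw [← h] at h2
  have hQn := Qd_ne_zero hirr n
  have hQm := Qd_ne_zero hirr m
  have hcross : ((Pd d n * Qd d m - Pd d m * Qd d n : ℤ) : ℝ)
      + ((Qd d m - Qd d n : ℤ) : ℝ) * Real.sqrt d = 0 := by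
    push_cast
    have e1 : (cfIter (Real.sqrt d) n * (Qd d n : ℝ)) * (Qd d m : ℝ)
        = ((Pd d n : ℝ) + Real.sqrt d) * (Qd d m : ℝ) := by rw [h1]
    have e2 : (cfIter (Real.sqrt d) n * (Qd d m : ℝ)) * (Qd d n : ℝ)
        = ((Pd d m : ℝ) + Real.sqrt d) * (Qd d n : ℝ) := by rw [h2]
    linear_combination e2 - e1
  obtain ⟨ha, hb⟩ := lin_indep hirr _ _ hcross
  have hQ : Qd d m = Qd d n := by omega
  refine ⟨?_, hQ.symm⟩
  have : Pd d n * Qd d m = Pd d m * Qd d n := by omega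
  rw [hQ] at this
  exact mul_right_cancel₀ hQn this

lemma evp_sub {f : ℕ → ℤ} {a b : ℕ} (ha : EvPeriod a f) (hb : EvPeriod b f) (hle : b ≤ a) :
    EvPeriod (a - b) f := by
  obtain ⟨Na, hNa⟩ := ha
  obtain ⟨Nb, hNb⟩ := hb
  refine ⟨Na + Nb, fun n hn => ?_⟩
  have h1 := hNb (n + (a - b)) (by omega)
  have h2 := hNa n (by omega)
  rw [show n + (a - b) + b = n + a from by omega] at h1
  rw [← h1, h2]

lemma evp_mod {f : ℕ → ℤ} {b : ℕ} (hb : EvPeriod b f) (hb0 : 0 < b) :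
    ∀ t, EvPeriod t f → EvPeriod (t % b) f := by
  intro t
  induction t using Nat.strong_induction_on with
  | _ t ih =>
    intro ht
    rcases lt_or_ge t b with h | h
    · rwa [Nat.mod_eq_of_lt h]
    · rw [Nat.mod_eq_sub_mod h]
      exact ih (t - b) (by omega) (evp_sub ht hb h)

lemma periodLen_dvd {α : ℝ} (hS : {t | 0 < t ∧ EvPeriod t (cfTerm α)}.Nonempty)
    {t : ℕ} (ht : 0 < t) (hEv : EvPeriod t (cfTerm α)) : periodLen α ∣ t := by
  have hmem : periodLen α ∈ {t | 0 < t ∧ EvPeriod t (cfTerm α)} := Nat.sInf_mem hS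
  obtain ⟨hl0, hlEv⟩ := hmem
  have hr := evp_mod hlEv hl0 t hEv
  rcases Nat.eq_zero_or_pos (t % periodLen α) with h0 | h0
  · exact Nat.dvd_of_mod_eq_zero h0
  · exfalso
    have hle : periodLen α ≤ t % periodLen α := Nat.sInf_le ⟨h0, hr⟩
    have := Nat.mod_lt t hl0
    omega

lemma S_nonempty (hirr : Irrational (Real.sqrt d)) (hd2 : 2 ≤ d) :
    {t | 0 < t ∧ EvPeriod t (cfTerm (Real.sqrt d))}.Nonempty := by
  classical
  set B : Finset (ℤ × ℤ) :=
    Finset.Icc ((1:ℤ), (1:ℤ)) ((⌊Real.sqrt d⌋ : ℤ), (2*⌊Real.sqrt d⌋ + 1 : ℤ)) with hB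
  have hmap : ∀ n : ℕ, n ∈ Finset.range (B.card + 1) →
      (Pd d (n+1), Qd d (n+1)) ∈ B := by
    intro n _
    obtain ⟨h1, h2, h3, h4⟩ := PQ_bounds hirr hd2 (n+1) (by omega)
    rw [hB, Finset.mem_Icc]
    exact ⟨⟨h1, h3⟩, ⟨h2, h4⟩⟩
  obtain ⟨i, hi, j, hj, hne, heq⟩ :=
    Finset.exists_ne_map_eq_of_card_lt_of_maps_to (by simp) hmap
  wlog hij : i < j generalizing i j
  · exact this j hj i hi hne.symm heq.symm (by omega)
  have hPQ : Pd d (i+1) = Pd d (j+1) ∧ Qd d (i+1) = Qd d (j+1) := by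
    constructor
    · exact congrArg Prod.fst heq
    · exact congrArg Prod.snd heq
  have hiter : cfIter (Real.sqrt d) (i+1) = cfIter (Real.sqrt d) (j+1) :=
    iter_eq_of_PQ_eq hirr hPQ.1 hPQ.2
  refine ⟨j - i, by omega, ⟨i + 1, fun n hn => ?_⟩⟩
  obtain ⟨m, rfl⟩ : ∃ m, n = (i+1) + m := ⟨n - (i+1), by omega⟩
  have hcong := cfIter_congr_add hiter m
  rw [cfTerm, cfTerm, show (i+1) + m + (j - i) = (j+1) + m from by omega, hcong]

lemma BD (hirr : Irrational (Real.sqrt d)) (hd2 : 2 ≤ d) (n m : ℕ) (hn : 1 ≤ n) (hm : 1 ≤ m)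
    (h : cfIter (Real.sqrt d) (n+1) = cfIter (Real.sqrt d) (m+1)) :
    cfIter (Real.sqrt d) n = cfIter (Real.sqrt d) m := by
  obtain ⟨hP', hQ'⟩ := PQ_eq_of_iter_eq hirr h
  -- common value u
  obtain ⟨hQ1pos, hP1lt, hP1gt⟩ := reduced hirr hd2 (n+1) (by omega)
  have hden : (Pd d (n+1) : ℝ) - Real.sqrt d ≠ 0 := sub_ne_zero_of_ne (Ne.symm (hirr.ne_int _))
  set u : ℝ := (Qd d (n+1) : ℝ) / ((Pd d (n+1) : ℝ) - Real.sqrt d) with hu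
  have key : ∀ j, 1 ≤ j → Pd d (j+1) = Pd d (n+1) → Qd d (j+1) = Qd d (n+1) →
      (-1:ℝ) < (cfTerm (Real.sqrt d) j : ℝ) + u ∧ ((cfTerm (Real.sqrt d) j : ℝ) + u) < 0 := by
    intro j hj hPj hQj
    obtain ⟨hQj0, hPjl, hPjg⟩ := reduced hirr hd2 j hj
    have hQjR : (0:ℝ) < (Qd d j : ℝ) := by exact_mod_cast hQj0
    have hQQ := QQ hirr j
    rw [hPj, hQj] at hQQ
    have hPr : ((Pd d (j+1) : ℤ) : ℝ)
        = (cfTerm (Real.sqrt d) j : ℝ) * (Qd d j : ℝ) - (Pd d j : ℝ) := by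
      rw [Pd_rec]; push_cast; ring
    rw [hPj] at hPr
    -- (Pd j - r) = (A j + u) * Qd j
    have huP : u * ((Pd d (n+1) : ℝ) - Real.sqrt d) = (Qd d (n+1) : ℝ) :=
      div_mul_cancel₀ _ hden
    have hmul : ((Pd d j : ℝ) - Real.sqrt d) * ((Pd d (n+1) : ℝ) - Real.sqrt d)
        = (((cfTerm (Real.sqrt d) j : ℝ) + u) * (Qd d j : ℝ)) * ((Pd d (n+1) : ℝ) - Real.sqrt d) := by
      linear_combination ((Pd d (n+1):ℝ) - Real.sqrt d) * hPr - hQQ - (Qd d j : ℝ) * huP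
    have hI3 : ((Pd d j : ℝ) - Real.sqrt d) = ((cfTerm (Real.sqrt d) j : ℝ) + u) * (Qd d j : ℝ) :=
      mul_right_cancel₀ hden hmul
    constructor
    · have h1 : -(Qd d j : ℝ) < ((cfTerm (Real.sqrt d) j : ℝ) + u) * (Qd d j : ℝ) := by
        rw [← hI3]; linarith
      nlinarith
    · have h1 : ((cfTerm (Real.sqrt d) j : ℝ) + u) * (Qd d j : ℝ) < 0 := by
        rw [← hI3]; linarith
      nlinarith
  have hkn := key n hn rfl rfl
  have hkm := key m hm hP'.symm hQ'.symm
  have hA : cfTerm (Real.sqrt d) n = cfTerm (Real.sqrt d) m := by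
    have h1 : ((cfTerm (Real.sqrt d) n : ℤ) : ℝ) < (cfTerm (Real.sqrt d) m : ℤ) + 1 := by
      push_cast; linarith [hkn.1, hkn.2, hkm.1, hkm.2]
    have h2 : ((cfTerm (Real.sqrt d) m : ℤ) : ℝ) < (cfTerm (Real.sqrt d) n : ℤ) + 1 := by
      push_cast; linarith [hkn.1, hkn.2, hkm.1, hkm.2]
    have h1' : cfTerm (Real.sqrt d) n < cfTerm (Real.sqrt d) m + 1 := by exact_mod_cast h1
    have h2' : cfTerm (Real.sqrt d) m < cfTerm (Real.sqrt d) n + 1 := by exact_mod_cast h2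
    omega
  rw [cf_rec hirr n, cf_rec hirr m, hA, h]

lemma purity (hirr : Irrational (Real.sqrt d)) (hd2 : 2 ≤ d) :
    cfIter (Real.sqrt d) (1 + periodLen (Real.sqrt d)) = cfIter (Real.sqrt d) 1 := by
  have hS := S_nonempty hirr hd2
  have hmem : 0 < periodLen (Real.sqrt d) ∧
      EvPeriod (periodLen (Real.sqrt d)) (cfTerm (Real.sqrt d)) := Nat.sInf_mem hS
  obtain ⟨hl0, N, hN⟩ := hmem
  set l := periodLen (Real.sqrt d) with hldef
  set M := N + 1 with hMdef
  have hM : cfIter (Real.sqrt d) (M + l) = cfIter (Real.sqrt d) M := by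
    apply eq_of_cfTerm_eq (irrational_cfIter hirr (M + l)) (irrational_cfIter hirr M)
    intro k
    rw [← cfTerm_add, ← cfTerm_add]
    have := hN (M + k) (by omega)
    rw [show M + k + l = M + l + k from by omega] at this
    exact this
  have hdown : ∀ j i, 1 ≤ i → i + j = M → cfIter (Real.sqrt d) (i + l) = cfIter (Real.sqrt d) i := by
    intro j
    induction j with
    | zero => intro i h1 h2; rw [show i = M from by omega]; exact hM
    | succ j ih =>
      intro i h1 h2
      have hup := ih (i+1) (by omega) (by omega)
      have := BD hirr hd2 i (i + l) h1 (by omega) ?_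
      · exact this.symm
      · rw [show i + l + 1 = i + 1 + l from by omega]
        exact hup.symm
  exact hdown (M - 1) 1 le_rfl (by omega)

lemma Qd_periodLen (hirr : Irrational (Real.sqrt d)) (hd2 : 2 ≤ d) :
    Qd d (periodLen (Real.sqrt d)) = 1 := by
  have hp := purity hirr hd2
  set l := periodLen (Real.sqrt d) with hldef
  rw [Nat.add_comm 1 l] at hp
  have hfr : Int.fract (cfIter (Real.sqrt d) l) = Int.fract (cfIter (Real.sqrt d) 0) := by
    have h1 : cfIter (Real.sqrt d) (l+1) = (Int.fract (cfIter (Real.sqrt d) l))⁻¹ := rfl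
    have h2 : cfIter (Real.sqrt d) 1 = (Int.fract (cfIter (Real.sqrt d) 0))⁻¹ := rfl
    rw [h1, h2] at hp
    exact inv_injective hp
  have hiter : cfIter (Real.sqrt d) l
      = ((cfTerm (Real.sqrt d) l - cfTerm (Real.sqrt d) 0 : ℤ) : ℝ) + Real.sqrt d := by
    have e1 : Int.fract (cfIter (Real.sqrt d) l)
        = cfIter (Real.sqrt d) l - (cfTerm (Real.sqrt d) l : ℝ) := rfl
    have e2 : Int.fract (cfIter (Real.sqrt d) 0)
        = cfIter (Real.sqrt d) 0 - (cfTerm (Real.sqrt d) 0 : ℝ) := rfl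
    rw [e1, e2, cfIter_zero] at hfr
    push_cast
    linarith
  have hrep := rep hirr l
  rw [hiter] at hrep
  have hcross : (((cfTerm (Real.sqrt d) l - cfTerm (Real.sqrt d) 0) * Qd d l - Pd d l : ℤ) : ℝ)
      + ((Qd d l - 1 : ℤ) : ℝ) * Real.sqrt d = 0 := by
    push_cast at hrep ⊢
    linear_combination hrep
  obtain ⟨-, hb⟩ := lin_indep hirr _ _ hcross
  omega

lemma dvd_of_Qd_one (hirr : Irrational (Real.sqrt d)) (hd2 : 2 ≤ d)
    {n : ℕ} (hn : 1 ≤ n) (hQ : Qd d n = 1) : periodLen (Real.sqrt d) ∣ n := by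
  obtain ⟨hQpos, hPl, hPg⟩ := reduced hirr hd2 n hn
  rw [hQ] at hPg
  norm_num at hPg
  -- Pd d n = ⌊√d⌋ = cfTerm √d 0
  have hA0l := A0_lt hirr
  have hA0u := lt_A0_add_one (d := d)
  have h1 : Pd d n < cfTerm (Real.sqrt d) 0 + 1 := by
    have : (Pd d n : ℝ) < (cfTerm (Real.sqrt d) 0 : ℝ) + 1 := by push_cast; linarith
    exact_mod_cast this
  have h2 : cfTerm (Real.sqrt d) 0 < Pd d n + 1 := by
    have : (cfTerm (Real.sqrt d) 0 : ℝ) < (Pd d n : ℝ) + 1 := by push_cast; linarith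
    exact_mod_cast this
  have hPA : Pd d n = cfTerm (Real.sqrt d) 0 := by omega
  have hrep := rep hirr n
  rw [hQ, hPA] at hrep
  push_cast at hrep
  rw [mul_one] at hrep
  -- fract equality
  have hfr : Int.fract (cfIter (Real.sqrt d) n) = Int.fract (Real.sqrt d) := by
    rw [hrep, cfTerm, cfIter_zero, Int.fract_intCast_add]
  have hone : cfIter (Real.sqrt d) (n+1) = cfIter (Real.sqrt d) 1 := by
    rw [cfIter_succ, cfIter_succ, hfr, cfIter_zero]
  have hEv : EvPeriod n (cfTerm (Real.sqrt d)) := by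
    refine ⟨1, fun m hm => ?_⟩
    obtain ⟨k, rfl⟩ : ∃ k, m = 1 + k := ⟨m - 1, by omega⟩
    have := cfIter_congr_add hone k
    rw [cfTerm, cfTerm, show 1 + k + n = n + 1 + k from by omega, this]
  exact periodLen_dvd (S_nonempty hirr hd2) (by omega) hEv

end NP

theorem stmt3 (d : ℕ) (hd : 0 < d) (hsq : ¬ IsSquare d) :
    (∃ x y : ℤ, x ^ 2 - (d : ℤ) * y ^ 2 = -1) ↔ Odd (periodLen (Real.sqrt d)) := by
  have hd2 : 2 ≤ d := by
    rcases Nat.lt_or_ge d 2 with h | h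
    · have hd1 : d = 1 := by omega
      subst hd1
      exact absurd ⟨1, rfl⟩ hsq
    · exact h
  have hirr : Irrational (Real.sqrt d) := irrational_sqrt_natCast_iff.2 hsq
  constructor
  · rintro ⟨x, y, hxy⟩
    set a : ℤ := |x| with ha
    set b : ℤ := |y| with hb
    have heq : a^2 - (d:ℤ) * b^2 = -1 := by rw [ha, hb, sq_abs, sq_abs]; exact hxy
    have hb0 : 1 ≤ b := by
      rcases eq_or_ne y 0 with h0 | h0
      · exfalso; rw [h0] at hxy; nlinarith [sq_nonneg x]
      · rw [hb]; exact Int.one_le_abs h0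
    have hy2 : 1 ≤ b^2 := by nlinarith
    have hdZ : (2:ℤ) ≤ (d:ℤ) := by exact_mod_cast hd2
    have ha0 : 1 ≤ a := by
      rcases eq_or_ne x 0 with h0 | h0
      · exfalso
        rw [ha, h0] at heq
        simp at heq
        nlinarith
      · rw [ha]; exact Int.one_le_abs h0
    have hab : b ≤ a := by nlinarith [sq_nonneg (a - b), sq_nonneg (a + b)]
    have haR : (1:ℝ) ≤ (a:ℝ) := by exact_mod_cast ha0
    have hbR : (1:ℝ) ≤ (b:ℝ) := by exact_mod_cast hb0
    have habR : (b:ℝ) ≤ (a:ℝ) := by exact_mod_cast hab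
    have hrr := NP.sqrt_mul_self' d
    have hr1 : 1 < Real.sqrt d := NP.sqrt_gt_one hd2
    have hprod : ((b:ℝ) * Real.sqrt d - a) * ((b:ℝ) * Real.sqrt d + a) = 1 := by
      have heqR : ((a:ℝ))^2 - (d:ℝ) * ((b:ℝ))^2 = -1 := by exact_mod_cast heq
      nlinarith
    have hplus : 0 < (b:ℝ) * Real.sqrt d + a := by nlinarith
    have hminus : 0 < (b:ℝ) * Real.sqrt d - a := by nlinarith
    have h2b : 2*(b:ℝ) < (b:ℝ) * Real.sqrt d + a := by nlinarith
    have happ : |(b:ℝ) * Real.sqrt d - a| * (2*b) < 1 := by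
      rw [abs_of_pos hminus]
      nlinarith
    obtain ⟨n, hleg⟩ := NP.legendre hirr a b (by omega) happ
    have hcop1 : IsCoprime a b := ⟨-a, (d:ℤ)*b, by linarith [heq]⟩
    have hdet := NP.detd (Real.sqrt d) (n+1)
    set e : ℤ := (-1)^(n+1) with he
    have hss : e * e = 1 := NP.neg_one_pow_sq (n+1)
    have hcop2 : IsCoprime (NP.hh (Real.sqrt d) (n+2)) (NP.kk (Real.sqrt d) (n+2)) :=
      ⟨e * NP.kk (Real.sqrt d) (n+1), -(e * NP.hh (Real.sqrt d) (n+1)),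
        by linear_combination e * hdet + hss⟩
    have hkpos : 1 ≤ NP.kk (Real.sqrt d) (n+2) := NP.kk_pos2 hirr n
    have hbk : b = NP.kk (Real.sqrt d) (n+2) := by
      have hdvd1 : b ∣ NP.kk (Real.sqrt d) (n+2) :=
        (hcop1.symm).dvd_of_dvd_mul_left ⟨NP.hh (Real.sqrt d) (n+2), hleg⟩
      have hdvd2 : NP.kk (Real.sqrt d) (n+2) ∣ b := by
        apply (hcop2.symm).dvd_of_dvd_mul_right
        exact ⟨a, by linear_combination -hleg⟩
      exact Int.dvd_antisymm (by omega) (by omega) hdvd1 hdvd2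
    have hah : a = NP.hh (Real.sqrt d) (n+2) := by
      have h5 : a * NP.kk (Real.sqrt d) (n+2) = NP.hh (Real.sqrt d) (n+2) * NP.kk (Real.sqrt d) (n+2) := by
        linear_combination hleg + NP.hh (Real.sqrt d) (n+2) * hbk
      exact mul_right_cancel₀ (by omega) h5
    have hQval : NP.Qd d (n+1) = e * (NP.hh (Real.sqrt d) (n+2)^2
        - d * NP.kk (Real.sqrt d) (n+2)^2) := rfl
    rw [← hah, ← hbk, heq] at hQval
    have hQpos : 0 < NP.Qd d (n+1) := (NP.reduced hirr hd2 (n+1) (by omega)).1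
    have hkey : Odd (n+1) ∧ NP.Qd d (n+1) = 1 := by
      rcases Nat.even_or_odd (n+1) with hev | ho
      · rw [he, hev.neg_one_pow] at hQval; omega
      · rw [he, ho.neg_one_pow] at hQval; exact ⟨ho, by omega⟩
    obtain ⟨c, hc⟩ := NP.dvd_of_Qd_one hirr hd2 (by omega : 1 ≤ n+1) hkey.2
    have := hkey.1
    rw [hc] at this
    exact (Nat.odd_mul.1 this).1
  · intro hodd
    have hQl : NP.Qd d (periodLen (Real.sqrt d)) = 1 := NP.Qd_periodLen hirr hd2
    refine ⟨NP.hh (Real.sqrt d) (periodLen (Real.sqrt d) + 1),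
      NP.kk (Real.sqrt d) (periodLen (Real.sqrt d) + 1), ?_⟩
    have hQdef : NP.Qd d (periodLen (Real.sqrt d))
        = (-1:ℤ)^(periodLen (Real.sqrt d)) * (NP.hh (Real.sqrt d) (periodLen (Real.sqrt d) + 1)^2
          - d * NP.kk (Real.sqrt d) (periodLen (Real.sqrt d) + 1)^2) := rfl
    rw [hodd.neg_one_pow, hQl] at hQdef
    linarith [hQdef]
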